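/- Fix EPD parameter values: reals L̊₁, C̊₁, L̊₂, C̊₂ with ξ̊₁ = 1/(L̊₁C̊₁) > 0, ξ̊₂ = 1/(L̊₂C̊₂) > 0, ξ̊₁ ≠ ξ̊₂, L̊₁L̊₂ < 0, and g̊ = −(√ξ̊₁ − √ξ̊₂)²·L̊₁L̊₂. Given real weights Δ(L₁), Δ(C₁), Δ(L₂), Δ(C₂), Δ(g), perturb the parameters as L_j(ε) = L̊_j(1 + Δ(L_j)ε), C_j(ε) = C̊_j(1 + Δ(C_j)ε), g(ε) = g̊(1 + Δ(g)ε), set ξ_j(ε) = 1/(L_j(ε)C_j(ε)), and define r(ε) = −2 + (g(ε)/(L₁(ε)L₂(ε)) + ξ₁(ε) + ξ₂(ε))/√(ξ₁(ε)ξ₂(ε)). Then r(0) = 0 and r is differentiable at ε = 0 with r′(0) = (ω₁/ω₂ − 1)(Δ(L₂) − Δ(C₁) − Δ(g)) + (ω₂/ω₁ − 1)(Δ(L₁) − Δ(C₂) − Δ(g)), where ω₁ = √ξ̊₁ and ω₂ = √ξ̊₂. -/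

import Mathlib

lemma sqrt_lin_hasDerivAt (p : ℝ) :
    HasDerivAt (fun ε : ℝ => Real.sqrt (1 + p * ε)) (p / 2) 0 := by
  have h : HasDerivAt (fun ε : ℝ => 1 + p * ε) p 0 := by
    simpa using ((hasDerivAt_id (0:ℝ)).const_mul p).const_add 1
  have h2 := h.sqrt (by norm_num)
  simpa using h2

lemma lin_hasDerivAt (p : ℝ) :
    HasDerivAt (fun ε : ℝ => 1 + p * ε) p 0 := by
  simpa using ((hasDerivAt_id (0:ℝ)).const_mul p).const_add 1

lemma aux_hasDerivAt (ω₁ ω₂ : ℝ) (h₁ : 0 < ω₁) (h₂ : 0 < ω₂)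
    (ΔL₁ ΔC₁ ΔL₂ ΔC₂ Δg : ℝ) :
    HasDerivAt (fun ε : ℝ => -2 + (ω₁ * ω₂)⁻¹ *
      (-(ω₁ - ω₂) ^ 2 * (1 + Δg * ε) * (Real.sqrt (1 + ΔC₁ * ε) * Real.sqrt (1 + ΔC₂ * ε)) /
          (Real.sqrt (1 + ΔL₁ * ε) * Real.sqrt (1 + ΔL₂ * ε)) +
        ω₁ ^ 2 * (Real.sqrt (1 + ΔL₂ * ε) * Real.sqrt (1 + ΔC₂ * ε)) /
          (Real.sqrt (1 + ΔL₁ * ε) * Real.sqrt (1 + ΔC₁ * ε)) +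
        ω₂ ^ 2 * (Real.sqrt (1 + ΔL₁ * ε) * Real.sqrt (1 + ΔC₁ * ε)) /
          (Real.sqrt (1 + ΔL₂ * ε) * Real.sqrt (1 + ΔC₂ * ε))))
      ((ω₁ / ω₂ - 1) * (ΔL₂ - ΔC₁ - Δg) + (ω₂ / ω₁ - 1) * (ΔL₁ - ΔC₂ - Δg)) 0 := by
  have hL1 := sqrt_lin_hasDerivAt ΔL₁
  have hC1 := sqrt_lin_hasDerivAt ΔC₁
  have hL2 := sqrt_lin_hasDerivAt ΔL₂
  have hC2 := sqrt_lin_hasDerivAt ΔC₂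
  have hlin := lin_hasDerivAt Δg
  have hT1 := ((hlin.const_mul (-(ω₁ - ω₂) ^ 2)).mul (hC1.mul hC2)).div (hL1.mul hL2)
    (by norm_num)
  have hT2 := ((hL2.mul hC2).const_mul (ω₁ ^ 2)).div (hL1.mul hC1) (by norm_num)
  have hT3 := ((hL1.mul hC1).const_mul (ω₂ ^ 2)).div (hL2.mul hC2) (by norm_num)
  have hF := (((hT1.add hT2).add hT3).const_mul (ω₁ * ω₂)⁻¹).const_add (-2)
  refine hF.congr_deriv ?_
  norm_num [Real.sqrt_one]
  field_simp
  ring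

set_option maxHeartbeats 1000000 in
/-- Perturbing the circuit parameters multiplicatively about an EPD point,
the quantity `r(ε) = −2 + (g(ε)/(L₁(ε)L₂(ε)) + ξ₁(ε) + ξ₂(ε))/√(ξ₁(ε)ξ₂(ε))` vanishes
at `ε = 0` and is differentiable there with
`r′(0) = (ω₁/ω₂ − 1)(Δ(L₂) − Δ(C₁) − Δ(g)) + (ω₂/ω₁ − 1)(Δ(L₁) − Δ(C₂) − Δ(g))`. -/
theorem epd_perturbation_derivative
    (Lo₁ Co₁ Lo₂ Co₂ ξo₁ ξo₂ go : ℝ)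
    (hξo₁ : ξo₁ = 1 / (Lo₁ * Co₁)) (hξo₂ : ξo₂ = 1 / (Lo₂ * Co₂))
    (hpos₁ : 0 < ξo₁) (hpos₂ : 0 < ξo₂) (hne : ξo₁ ≠ ξo₂) (hLL : Lo₁ * Lo₂ < 0)
    (hgo : go = -((Real.sqrt ξo₁ - Real.sqrt ξo₂) ^ 2) * (Lo₁ * Lo₂))
    (ΔL₁ ΔC₁ ΔL₂ ΔC₂ Δg : ℝ)
    (L₁ C₁ L₂ C₂ g ξ₁ ξ₂ r : ℝ → ℝ)
    (hL₁ : ∀ ε, L₁ ε = Lo₁ * (1 + ΔL₁ * ε)) (hC₁ : ∀ ε, C₁ ε = Co₁ * (1 + ΔC₁ * ε))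
    (hL₂ : ∀ ε, L₂ ε = Lo₂ * (1 + ΔL₂ * ε)) (hC₂ : ∀ ε, C₂ ε = Co₂ * (1 + ΔC₂ * ε))
    (hg : ∀ ε, g ε = go * (1 + Δg * ε))
    (hξ₁ : ∀ ε, ξ₁ ε = 1 / (L₁ ε * C₁ ε)) (hξ₂ : ∀ ε, ξ₂ ε = 1 / (L₂ ε * C₂ ε))
    (hr : ∀ ε, r ε = -2 + (g ε / (L₁ ε * L₂ ε) + ξ₁ ε + ξ₂ ε) / Real.sqrt (ξ₁ ε * ξ₂ ε))
    (ω₁ ω₂ : ℝ) (hω₁ : ω₁ = Real.sqrt ξo₁) (hω₂ : ω₂ = Real.sqrt ξo₂) :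
    r 0 = 0 ∧
    HasDerivAt r
      ((ω₁ / ω₂ - 1) * (ΔL₂ - ΔC₁ - Δg) + (ω₂ / ω₁ - 1) * (ΔL₁ - ΔC₂ - Δg)) 0 := by
  have hω₁pos : 0 < ω₁ := by rw [hω₁]; exact Real.sqrt_pos.2 hpos₁
  have hω₂pos : 0 < ω₂ := by rw [hω₂]; exact Real.sqrt_pos.2 hpos₂
  have hω₁sq : ω₁ ^ 2 = ξo₁ := by rw [hω₁]; exact Real.sq_sqrt hpos₁.le
  have hω₂sq : ω₂ ^ 2 = ξo₂ := by rw [hω₂]; exact Real.sq_sqrt hpos₂.le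
  have hgo' : go = -(ω₁ - ω₂) ^ 2 * (Lo₁ * Lo₂) := by rw [hgo, hω₁, hω₂]
  have hLC₁ : 0 < Lo₁ * Co₁ := by
    rw [hξo₁] at hpos₁; exact one_div_pos.mp hpos₁
  have hLC₂ : 0 < Lo₂ * Co₂ := by
    rw [hξo₂] at hpos₂; exact one_div_pos.mp hpos₂
  have hp : ∀ p : ℝ, ∀ᶠ ε in nhds (0:ℝ), 0 < 1 + p * ε := by
    intro p
    have hc : Continuous fun ε : ℝ => 1 + p * ε :=
      continuous_const.add (continuous_const.mul continuous_id)
    exact (isOpen_lt continuous_const hc).mem_nhds (by norm_num)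
  have hEq : r =ᶠ[nhds (0:ℝ)] (fun ε : ℝ => -2 + (ω₁ * ω₂)⁻¹ *
      (-(ω₁ - ω₂) ^ 2 * (1 + Δg * ε) * (Real.sqrt (1 + ΔC₁ * ε) * Real.sqrt (1 + ΔC₂ * ε)) /
          (Real.sqrt (1 + ΔL₁ * ε) * Real.sqrt (1 + ΔL₂ * ε)) +
        ω₁ ^ 2 * (Real.sqrt (1 + ΔL₂ * ε) * Real.sqrt (1 + ΔC₂ * ε)) /
          (Real.sqrt (1 + ΔL₁ * ε) * Real.sqrt (1 + ΔC₁ * ε)) +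
        ω₂ ^ 2 * (Real.sqrt (1 + ΔL₁ * ε) * Real.sqrt (1 + ΔC₁ * ε)) /
          (Real.sqrt (1 + ΔL₂ * ε) * Real.sqrt (1 + ΔC₂ * ε)))) := by
    filter_upwards [hp ΔL₁, hp ΔC₁, hp ΔL₂, hp ΔC₂] with ε ha hb hc hd
    have hLo₁ : Lo₁ ≠ 0 := left_ne_zero_of_mul hLC₁.ne'
    have hCo₁ : Co₁ ≠ 0 := right_ne_zero_of_mul hLC₁.ne'
    have hLo₂ : Lo₂ ≠ 0 := left_ne_zero_of_mul hLC₂.ne'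
    have hCo₂ : Co₂ ≠ 0 := right_ne_zero_of_mul hLC₂.ne'
    set sa := Real.sqrt (1 + ΔL₁ * ε) with hsa
    set sb := Real.sqrt (1 + ΔC₁ * ε) with hsb
    set sc := Real.sqrt (1 + ΔL₂ * ε) with hsc
    set sd := Real.sqrt (1 + ΔC₂ * ε) with hsd
    have hsa2 : sa ^ 2 = 1 + ΔL₁ * ε := Real.sq_sqrt ha.le
    have hsb2 : sb ^ 2 = 1 + ΔC₁ * ε := Real.sq_sqrt hb.le
    have hsc2 : sc ^ 2 = 1 + ΔL₂ * ε := Real.sq_sqrt hc.le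
    have hsd2 : sd ^ 2 = 1 + ΔC₂ * ε := Real.sq_sqrt hd.le
    have hsa0 : 0 < sa := Real.sqrt_pos.2 ha
    have hsb0 : 0 < sb := Real.sqrt_pos.2 hb
    have hsc0 : 0 < sc := Real.sqrt_pos.2 hc
    have hsd0 : 0 < sd := Real.sqrt_pos.2 hd
    have hξ1 : ξ₁ ε = ξo₁ / ((1 + ΔL₁ * ε) * (1 + ΔC₁ * ε)) := by
      rw [hξ₁, hL₁, hC₁, hξo₁]
      field_simp
    have hξ2 : ξ₂ ε = ξo₂ / ((1 + ΔL₂ * ε) * (1 + ΔC₂ * ε)) := by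
      rw [hξ₂, hL₂, hC₂, hξo₂]
      field_simp
    have hkey : ξ₁ ε * ξ₂ ε = (ω₁ * ω₂ / (sa * sb * sc * sd)) ^ 2 := by
      rw [hξ1, hξ2, div_pow,
        show (sa * sb * sc * sd) ^ 2 = sa ^ 2 * sb ^ 2 * (sc ^ 2 * sd ^ 2) by ring,
        hsa2, hsb2, hsc2, hsd2,
        show (ω₁ * ω₂) ^ 2 = ω₁ ^ 2 * ω₂ ^ 2 by ring, hω₁sq, hω₂sq]
      rw [div_mul_div_comm]
    have hs : Real.sqrt (ξ₁ ε * ξ₂ ε) = ω₁ * ω₂ / (sa * sb * sc * sd) := by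
      rw [hkey, Real.sqrt_sq (by positivity)]
    rw [hr, hs, hξ1, hξ2, hg, hL₁, hL₂, hgo',
      show (1 + ΔL₁ * ε) = sa ^ 2 from hsa2.symm,
      show (1 + ΔC₁ * ε) = sb ^ 2 from hsb2.symm,
      show (1 + ΔL₂ * ε) = sc ^ 2 from hsc2.symm,
      show (1 + ΔC₂ * ε) = sd ^ 2 from hsd2.symm,
      ← hω₁sq, ← hω₂sq]
    have hLL' : Lo₁ * Lo₂ ≠ 0 := hLL.ne
    field_simp [hsa0.ne', hsb0.ne', hsc0.ne', hsd0.ne', hω₁pos.ne', hω₂pos.ne', hLo₁, hLo₂]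
  constructor
  · rw [hEq.eq_of_nhds]
    norm_num [Real.sqrt_one]
    field_simp
    ring
  · exact (aux_hasDerivAt ω₁ ω₂ hω₁pos hω₂pos ΔL₁ ΔC₁ ΔL₂ ΔC₂ Δg).congr_of_eventuallyEq hEq
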